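/- Let A be an n×n real symmetric positive definite matrix, p_i := A_{ii}/Tr(A), Z_i := (1/A_{ii}) · A^{1/2} e_i e_iᵀ A^{1/2}, and G := Σ_{i=1}^n p_i Z_i = A/Tr(A). Then Σ_{i=1}^n p_i · G^{-1/2} Z_i G^{-1} Z_i G^{-1/2} = Tr(A) · diag(A_{11}^{-1}, …, A_{nn}^{-1}); consequently the largest eigenvalue of this matrix equals ν = Tr(A) / (min_{1≤i≤n} A_{ii}). -/

import Mathlib

open Matrix Finset

open scoped ComplexOrder in
/-- The positive semidefinite square root, as defined in Mathlib (Dec 2024) and since removed. -/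
noncomputable def Matrix.PosSemidef.sqrt {n : Type*} [Fintype n] [DecidableEq n]
    {𝕜 : Type*} [RCLike 𝕜] {A : Matrix n n 𝕜} (hA : A.PosSemidef) : Matrix n n 𝕜 :=
  hA.1.eigenvectorUnitary.1 * diagonal ((↑) ∘ (√·) ∘ hA.1.eigenvalues) *
  (star hA.1.eigenvectorUnitary : Matrix n n 𝕜)

open scoped MatrixOrder in
theorem Matrix.PosSemidef.sqrt_eq_cfcSqrt {n : Type*} [Fintype n] [DecidableEq n]
    {A : Matrix n n ℝ} (hA : A.PosSemidef) : hA.sqrt = CFC.sqrt A := by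
  rw [CFC.sqrt_eq_cfc, cfc_nnreal_eq_real _ A hA.nonneg, hA.1.cfc_eq]
  simp only [IsHermitian.cfc, Unitary.conjStarAlgAut_apply, Matrix.PosSemidef.sqrt]
  congr 3
  ext i
  simp [Real.coe_sqrt, Real.coe_toNNReal', max_eq_left (hA.eigenvalues_nonneg i)]

open scoped MatrixOrder in
theorem Matrix.PosSemidef.sqrt_mul_self {n : Type*} [Fintype n] [DecidableEq n]
    {A : Matrix n n ℝ} (hA : A.PosSemidef) : hA.sqrt * hA.sqrt = A := by
  rw [hA.sqrt_eq_cfcSqrt]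
  exact CFC.sqrt_mul_sqrt_self A hA.nonneg

open scoped MatrixOrder in
theorem Matrix.PosSemidef.posSemidef_sqrt {n : Type*} [Fintype n] [DecidableEq n]
    {A : Matrix n n ℝ} (hA : A.PosSemidef) : hA.sqrt.PosSemidef := by
  rw [hA.sqrt_eq_cfcSqrt]
  exact (CFC.sqrt_nonneg A).posSemidef

open scoped MatrixOrder in
theorem Matrix.PosSemidef.eq_sqrt_of_sq_eq {n : Type*} [Fintype n] [DecidableEq n]
    {A : Matrix n n ℝ} (hA : A.PosSemidef) {B : Matrix n n ℝ} (hB : B.PosSemidef)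
    (hAB : A ^ 2 = B) : A = hB.sqrt := by
  rw [hB.sqrt_eq_cfcSqrt]
  exact (CFC.sqrt_unique (by rw [← sq]; exact hAB) hA.nonneg).symm

/-- For an n×n real symmetric positive definite matrix A (n ≥ 1), with
pᵢ := Aᵢᵢ/Tr(A), Zᵢ := (1/Aᵢᵢ) A^{1/2} eᵢ eᵢᵀ A^{1/2} and G := Σ pᵢ Zᵢ, one has
Σ pᵢ G^{-1/2} Zᵢ G⁻¹ Zᵢ G^{-1/2} = Tr(A)·diag(A₁₁⁻¹, …, A_nn⁻¹); consequently the
largest eigenvalue of this matrix equals ν = Tr(A)/min_i Aᵢᵢ. -/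
theorem nu_convenient_probabilities {n : ℕ} (hn : 0 < n)
    (A : Matrix (Fin n) (Fin n) ℝ) (hA : A.PosDef)
    (p : Fin n → ℝ) (hp : ∀ i, p i = A i i / A.trace)
    (Z : Fin n → Matrix (Fin n) (Fin n) ℝ)
    (hZ : ∀ i, Z i = (A i i)⁻¹ •
      (hA.posSemidef.sqrt * Matrix.single i i 1 * hA.posSemidef.sqrt))
    (G : Matrix (Fin n) (Fin n) ℝ) (hG : G = ∑ i, p i • Z i)
    (hGinv : (G⁻¹).PosSemidef) :
    (∑ i, p i • (hGinv.sqrt * Z i * G⁻¹ * Z i * hGinv.sqrt)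
        = A.trace • Matrix.diagonal (fun i => (A i i)⁻¹)) ∧
    ∀ hS : (∑ i, p i • (hGinv.sqrt * Z i * G⁻¹ * Z i * hGinv.sqrt)).IsHermitian,
      (⨆ j, hS.eigenvalues j) = A.trace / (⨅ i, A i i) := by
  haveI : Nonempty (Fin n) := ⟨⟨0, hn⟩⟩
  set T := hA.posSemidef.sqrt with hT
  have hTT : T * T = A := hA.posSemidef.sqrt_mul_self
  have hdiag : ∀ i, 0 < A i i := by
    intro i
    exact hA.diag_pos
  have htr : 0 < A.trace := by
    rw [Matrix.trace]
    exact Finset.sum_pos (fun i _ => hdiag i) Finset.univ_nonempty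
  have hAdet : IsUnit A.det := isUnit_iff_ne_zero.mpr hA.det_pos.ne'
  have hTdet : IsUnit T.det := by
    have h : T.det * T.det = A.det := by rw [← det_mul, hTT]
    exact isUnit_of_mul_isUnit_left (h ▸ hAdet)
  have hTiT : T⁻¹ * T = 1 := nonsing_inv_mul T hTdet
  have hTTi : T * T⁻¹ = 1 := mul_nonsing_inv T hTdet
  have hAinv : A⁻¹ = T⁻¹ * T⁻¹ := by rw [← hTT, Matrix.mul_inv_rev]
  have hAAi : A * A⁻¹ = 1 := mul_nonsing_inv A hAdet
  have hsumE : (∑ i : Fin n, Matrix.single i i (1 : ℝ)) = 1 := by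
    ext a b
    simp [Matrix.sum_apply, Matrix.single, Matrix.one_apply, ite_and]
  have hGA : G = A.trace⁻¹ • A := by
    rw [hG]
    have hterm : ∀ i : Fin n, p i • Z i
        = A.trace⁻¹ • (T * Matrix.single i i 1 * T) := by
      intro i
      rw [hp, hZ, smul_smul]
      congr 1
      field_simp
      exact div_self (hdiag i).ne'
    rw [Finset.sum_congr rfl fun i _ => hterm i, ← Finset.smul_sum]
    congr 1
    calc (∑ i : Fin n, T * Matrix.single i i 1 * T)
        = (T * ∑ i : Fin n, Matrix.single i i 1) * T := by
          rw [Finset.mul_sum, Finset.sum_mul]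
      _ = A := by rw [hsumE, mul_one, hTT]
  have hGi : G⁻¹ = A.trace • A⁻¹ := by
    apply inv_eq_right_inv
    rw [hGA, Matrix.smul_mul, Matrix.mul_smul, smul_smul,
      inv_mul_cancel₀ htr.ne', one_smul, hAAi]
  have hSqrt : hGinv.sqrt = Real.sqrt A.trace • T⁻¹ := by
    refine ((Matrix.PosSemidef.eq_sqrt_of_sq_eq ?_ hGinv ?_)).symm
    · have hpsd : (T⁻¹).PosSemidef := hA.posSemidef.posSemidef_sqrt.inv
      exact hpsd.smul (Real.sqrt_nonneg _)
    · rw [pow_two, Matrix.smul_mul, Matrix.mul_smul, smul_smul,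
        Real.mul_self_sqrt htr.le, hGi, hAinv]
  have h1 : ∀ X : Matrix (Fin n) (Fin n) ℝ, T⁻¹ * (T * X) = X := by
    intro X; rw [← mul_assoc, hTiT, one_mul]
  have h2 : ∀ X : Matrix (Fin n) (Fin n) ℝ, T * (T⁻¹ * X) = X := by
    intro X; rw [← mul_assoc, hTTi, one_mul]
  have hterm : ∀ i : Fin n, p i • (hGinv.sqrt * Z i * G⁻¹ * Z i * hGinv.sqrt)
      = (A.trace * (A i i)⁻¹) • Matrix.single i i 1 := by
    intro i
    rw [hSqrt, hZ, hGi, hAinv]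
    have hmat : T⁻¹ * (T * Matrix.single i i 1 * T) * (T⁻¹ * T⁻¹) *
        (T * Matrix.single i i 1 * T) * T⁻¹ = Matrix.single i i 1 := by
      simp only [mul_assoc, h1, h2]
      rw [hTTi, mul_one, Matrix.single_mul_single_same, mul_one]
    simp only [Matrix.smul_mul, Matrix.mul_smul, smul_smul]
    rw [hmat, hp]
    congr 1
    have h0 : A i i ≠ 0 := (hdiag i).ne'
    have hs : Real.sqrt A.trace * Real.sqrt A.trace = A.trace := Real.mul_self_sqrt htr.le
    field_simp
    ring_nf
    rw [Real.sq_sqrt htr.le]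
  have hdiagsum : (A.trace • Matrix.diagonal (fun i => (A i i)⁻¹) : Matrix (Fin n) (Fin n) ℝ)
      = ∑ i : Fin n, (A.trace * (A i i)⁻¹) • Matrix.single i i 1 := by
    ext a b
    by_cases hab : a = b
    · subst hab
      simp [Matrix.sum_apply, Matrix.single, ite_and, Matrix.diagonal_apply]
    · simp [Matrix.sum_apply, Matrix.single, ite_and, Matrix.diagonal_apply, hab,
        Ne.symm hab]
  have hmain : (∑ i, p i • (hGinv.sqrt * Z i * G⁻¹ * Z i * hGinv.sqrt))
      = A.trace • Matrix.diagonal (fun i => (A i i)⁻¹) := by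
    rw [Finset.sum_congr rfl fun i _ => hterm i, hdiagsum]
  refine ⟨hmain, fun hS => ?_⟩
  -- eigenvalues of the diagonal matrix
  have hM : (∑ i, p i • (hGinv.sqrt * Z i * G⁻¹ * Z i * hGinv.sqrt))
      = Matrix.diagonal (fun i => A.trace * (A i i)⁻¹) := by
    rw [hmain, ← Matrix.diagonal_smul]
    congr 1
  have hspec : Set.range hS.eigenvalues = Set.range (fun i => A.trace * (A i i)⁻¹) := by
    rw [← hS.spectrum_real_eq_range_eigenvalues, hM, spectrum_diagonal]
  obtain ⟨i0, -, hi0⟩ := Finset.exists_min_image Finset.univ (fun i => A i i)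
    Finset.univ_nonempty
  have hi0' : ∀ i, A i0 i0 ≤ A i i := fun i => hi0 i (Finset.mem_univ i)
  have hinf : (⨅ i, A i i) = A i0 i0 :=
    le_antisymm (ciInf_le (Set.Finite.bddBelow (Set.finite_range _)) i0) (le_ciInf hi0')
  have hsup : (⨆ i, A.trace * (A i i)⁻¹) = A.trace * (A i0 i0)⁻¹ := by
    refine le_antisymm (ciSup_le fun i => ?_)
      (le_ciSup (f := fun i => A.trace * (A i i)⁻¹) (Set.Finite.bddAbove (Set.finite_range _)) i0)
    exact mul_le_mul_of_nonneg_left (inv_anti₀ (hdiag i0) (hi0' i)) htr.le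
  calc (⨆ j, hS.eigenvalues j) = sSup (Set.range hS.eigenvalues) := rfl
    _ = sSup (Set.range fun i => A.trace * (A i i)⁻¹) := by rw [hspec]
    _ = A.trace * (A i0 i0)⁻¹ := hsup
    _ = A.trace / (⨅ i, A i i) := by rw [hinf, div_eq_mul_inv]
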